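/- Let t = (q,g,R,q') be a transition of a timed automaton and α : X → ℕ a bound function such that α_x ≥ c for every constraint x # c occurring in the guard g. Then for every zone Z: Post(Closure_α(Z), t) ⊆ Closure_α(Post(Z, t)). -/
import Mathlib


attribute [local instance] Classical.propDecidable

noncomputable section

namespace TAform

/-! ### Weights `(≼, c)` with `c ∈ ℤ ∪ {∞}` -/

/-- Values in `ℤ ∪ {∞}`: `none` represents `∞`. -/
abbrev OVal := Option ℤ

/-- Addition on `ℤ ∪ {∞}`. -/
def ovAdd : OVal → OVal → OVal
  | some a, some b => some (a + b)
  | _, _ => none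

/-- Strict order on `ℤ ∪ {∞}`. -/
def ovLt : OVal → OVal → Prop
  | some a, some b => a < b
  | some _, none => True
  | none, _ => False

/-- A weight `(≼, c)`: `strict = true` means `≼` is `<`, `strict = false` means `≤`;
`val ∈ ℤ ∪ {∞}`. -/
structure Weight where
  strict : Bool
  val : OVal

/-- The weight `(<, ∞)`. -/
def winf : Weight := ⟨true, none⟩

/-- The weight `(≤, c)`. -/
def wle (c : ℤ) : Weight := ⟨false, some c⟩

/-- The weight `(<, c)`. -/
def wlt (c : ℤ) : Weight := ⟨true, some c⟩

/-- Addition: `(≼₁,c₁)+(≼₂,c₂) = (≼,c₁+c₂)` where `≼` is `<` iff `≼₁` or `≼₂` is `<`. -/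
def Weight.add (a b : Weight) : Weight := ⟨a.strict || b.strict, ovAdd a.val b.val⟩

/-- Order: `(≼₁,c₁) < (≼₂,c₂)` iff `c₁ < c₂`, or `c₁ = c₂`, `≼₁` is `<` and `≼₂` is `≤`. -/
def Weight.lt (a b : Weight) : Prop :=
  ovLt a.val b.val ∨ (a.val = b.val ∧ a.strict = true ∧ b.strict = false)

def Weight.le (a b : Weight) : Prop := Weight.lt a b ∨ a = b

/-- Minus: `−(≼,c) = (≼,−c)`. -/
def Weight.neg (w : Weight) : Weight := ⟨w.strict, Option.map (fun c => -c) w.val⟩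

/-- Floor: `⌊(<,c)⌋ = (≤,c−1)` and `⌊(≤,c)⌋ = (≤,c)`. -/
def Weight.floor (w : Weight) : Weight :=
  ⟨false, if w.strict then Option.map (fun c => c - 1) w.val else w.val⟩

/-- Ceiling (on integer-valued weights): `⌈(≤,c)⌉ = (≤,c)` and `⌈(<,c)⌉ = (<,c+1)`. -/
def Weight.ceil (w : Weight) : Weight :=
  if w.strict then ⟨true, Option.map (fun c => c + 1) w.val⟩ else w

/-- Maximum of two weights. -/
def Weight.max (a b : Weight) : Weight := if Weight.lt a b then b else a

/-- Satisfaction: `d ≼ c` for a real number `d` and a weight `(≼,c)`. -/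
def Weight.sat (w : Weight) (d : ℝ) : Prop :=
  match w.val with
  | none => True
  | some c => if w.strict then d < (c : ℝ) else d ≤ (c : ℝ)

/-! ### Distance graphs and their semantics -/

/-- Vertices: clocks of `X` together with the special vertex `x₀` (represented by `none`). -/
abbrev Vtx (X : Type*) := Option X

/-- A distance graph: a weight for every ordered pair of vertices.  The edge
`a →^{≼ c} b` represents the constraint `v b − v a ≼ c`. -/
abbrev DGraph (X : Type*) := Vtx X → Vtx X → Weight

/-- A clock valuation. -/
abbrev Val (X : Type*) := X → ℝ

/-- The valuation is nonnegative (clock valuations map into `ℝ≥0`). -/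
def Nonneg {X : Type*} (v : Val X) : Prop := ∀ x, 0 ≤ v x

/-- Extension of a valuation to all vertices, sending `x₀` to `0`. -/
def extV {X : Type*} (v : Val X) : Vtx X → ℝ
  | none => 0
  | some x => v x

/-- Semantics of a distance graph: the set of nonnegative clock valuations
(with `x₀ = 0`) satisfying all edge constraints. -/
def sem {X : Type*} (G : DGraph X) : Set (Val X) :=
  { v | Nonneg v ∧ ∀ a b, (G a b).sat (extV v b - extV v a) }

/-- Weight of the path `a :: l ++ [b]` in `G` (sum of the weights of its edges). -/
def pathWeight {X : Type*} (G : DGraph X) : Vtx X → List (Vtx X) → Vtx X → Weight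
  | a, [], b => G a b
  | a, c :: l, b => (G a c).add (pathWeight G c l b)

/-- `G` has only positive cycles: no cycle has weight at most `(<,0)`. -/
def OnlyPositiveCycles {X : Type*} (G : DGraph X) : Prop :=
  ∀ (a : Vtx X) (l : List (Vtx X)), ¬ (pathWeight G a l a).le (wlt 0)

/-- Canonical form: the weight of the edge from `a` to `b` is a lower bound of the
weights of all paths from `a` to `b`. -/
def PathCanonical {X : Type*} (G : DGraph X) : Prop :=
  ∀ (a b : Vtx X) (l : List (Vtx X)), (G a b).le (pathWeight G a l b)

/-- The weight `w` bounds the difference `v b − v a` over all `v ∈ S`. -/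
def Bounds {X : Type*} (S : Set (Val X)) (a b : Vtx X) (w : Weight) : Prop :=
  ∀ v ∈ S, w.sat (extV v b - extV v a)

/-- `G` is the canonical distance graph of the set `S`: it represents `S` and each of
its edge weights is the least weight bounding the corresponding difference over `S`
(equivalently, for sets defined by clock constraints, the lower bound of the weights
of paths between its endpoints). -/
def IsCanonGraph {X : Type*} (G : DGraph X) (S : Set (Val X)) : Prop :=
  sem G = S ∧ ∀ a b w, Bounds S a b w → (G a b).le w

/-- A zone: a set of valuations defined by a conjunction of constraints of the form
`x − y # c` or `x # c`, i.e. the set represented by some distance graph. -/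
def IsZone {X : Type*} (Z : Set (Val X)) : Prop := ∃ G : DGraph X, sem G = Z

/-! ### Regions and closure -/

/-- Region equivalence with respect to the bound function `α`: same integer parts
(or both above the bound), same set of clocks with zero fractional part, and the
same ordering of fractional parts of bounded clocks. -/
def regEq {X : Type*} (α : X → ℕ) (v w : Val X) : Prop :=
  (∀ x, ((α x : ℝ) < v x ∧ (α x : ℝ) < w x) ∨
    (⌊v x⌋ = ⌊w x⌋ ∧ (Int.fract (v x) = 0 ↔ Int.fract (w x) = 0))) ∧
  (∀ x y, v x ≤ (α x : ℝ) → v y ≤ (α y : ℝ) →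
    (Int.fract (v x) ≤ Int.fract (v y) ↔ Int.fract (w x) ≤ Int.fract (w y)))

/-- A region with respect to `α`: an equivalence class of region equivalence
(inside the nonnegative valuations). -/
def IsRegion {X : Type*} (α : X → ℕ) (R : Set (Val X)) : Prop :=
  ∃ v : Val X, Nonneg v ∧ R = { w | Nonneg w ∧ regEq α v w }

/-- Closure abstraction: the union of the regions (w.r.t. `α`) intersecting `S`. -/
def Closure {X : Type*} (α : X → ℕ) (S : Set (Val X)) : Set (Val X) :=
  ⋃₀ { R | IsRegion α R ∧ (R ∩ S).Nonempty }

/-! ### LU-bounds and the `Extra⁺_LU` extrapolation -/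

/-- `w > (≤, l)` where `l ∈ ℕ ∪ {−∞}` (`⊥` is `−∞`). -/
def gtLB (w : Weight) (l : WithBot ℕ) : Prop :=
  ∀ n : ℕ, l = (n : WithBot ℕ) → ovLt (some (n : ℤ)) w.val

/-- `−w > (≤, l)` where `l ∈ ℕ ∪ {−∞}`. -/
def negGtLB (w : Weight) (l : WithBot ℕ) : Prop :=
  ∃ c : ℤ, w.val = some c ∧ ∀ n : ℕ, l = (n : WithBot ℕ) → c < -(n : ℤ)

/-- The weight `(<, −u)` for `u ∈ ℕ ∪ {−∞}` (with `(<,∞)` when `u = −∞`). -/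
def wltNeg (u : WithBot ℕ) : Weight :=
  ⟨true, WithBot.recBotCoe none (fun n => some (-(n : ℤ))) u⟩

/-- The `Extra⁺_{LU}` extrapolation, applied edgewise to a distance graph `G`
(the canonical graph of a zone): `Z⁺_{xy} = (<,∞)` if `Z_{xy} > (≤,L_y)`, or
`−Z_{y0} > (≤,L_y)`, or `−Z_{x0} > (≤,U_x)` and `y ≠ x₀`;
`Z⁺_{x0} = (<,−U_x)` if `−Z_{x0} > (≤,U_x)`; and `Z⁺_{xy} = Z_{xy}` otherwise. -/
def extraLU {X : Type*} (L U : X → WithBot ℕ) (G : DGraph X) : DGraph X := fun a b =>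
  match a, b with
  | some x, some y =>
      if gtLB (G (some x) (some y)) (L y) ∨ negGtLB (G (some y) none) (L y) ∨
          negGtLB (G (some x) none) (U x)
      then winf else G (some x) (some y)
  | none, some y =>
      if gtLB (G none (some y)) (L y) ∨ negGtLB (G (some y) none) (L y)
      then winf else G none (some y)
  | some x, none =>
      if negGtLB (G (some x) none) (U x) then wltNeg (U x) else G (some x) none
  | none, none => G none none

/-! ### LU-preorder and its abstraction -/

/-- `l < r` where `l ∈ ℕ ∪ {−∞}` and `r : ℝ`. -/
def lbLtR (l : WithBot ℕ) (r : ℝ) : Prop := ∀ n : ℕ, l = (n : WithBot ℕ) → (n : ℝ) < r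

/-- The LU-preorder `ν' ≼_{LU} ν`: for each clock `x`, either `ν' x = ν x`,
or `L x < ν' x < ν x`, or `U x < ν x < ν' x`. -/
def LUpre {X : Type*} (L U : X → WithBot ℕ) (ν' ν : Val X) : Prop :=
  ∀ x, ν' x = ν x ∨ (lbLtR (L x) (ν' x) ∧ ν' x < ν x) ∨ (lbLtR (U x) (ν x) ∧ ν x < ν' x)

/-- The abstraction `a_{≼LU}(W) = { ν | ∃ ν' ∈ W, ν' ≼_{LU} ν }` (inside the
nonnegative valuations). -/
def aLU {X : Type*} (L U : X → WithBot ℕ) (W : Set (Val X)) : Set (Val X) :=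
  { ν | Nonneg ν ∧ ∃ ν' ∈ W, LUpre L U ν' ν }

/-! ### Guards, transitions, timed automata -/

/-- Comparison operators `# ∈ {<, ≤, =, ≥, >}`. -/
inductive Cmp | lt | le | eq | ge | gt
deriving DecidableEq

/-- Satisfaction of a comparison by real numbers. -/
def Cmp.sat : Cmp → ℝ → ℝ → Prop
  | .lt, a, b => a < b
  | .le, a, b => a ≤ b
  | .eq, a, b => a = b
  | .ge, a, b => a ≥ b
  | .gt, a, b => a > b

/-- A clock constraint (guard): a conjunction (list) of constraints `x # c`, `c ∈ ℕ`. -/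
abbrev Guard (X : Type*) := List (X × Cmp × ℕ)

/-- `v ⊨ g`: every conjunct of the guard holds. -/
def gsat {X : Type*} (v : Val X) (g : Guard X) : Prop :=
  ∀ p ∈ g, Cmp.sat p.2.1 (v p.1) (p.2.2 : ℝ)

/-- `[R]v`: reset the clocks in `R` to `0`, leaving the others unchanged. -/
def resetVal {X : Type*} (R : Set X) (v : Val X) : Val X := Set.indicator Rᶜ v

/-- One step `ν →^{δ,t} ν'` for a transition with guard `g` and reset set `R`:
`ν + δ ⊨ g` and `ν' = [R](ν + δ)`. -/
def step {X : Type*} (g : Guard X) (R : Set X) (δ : ℝ) (ν ν' : Val X) : Prop :=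
  0 ≤ δ ∧ gsat (fun x => ν x + δ) g ∧ ν' = resetVal R (fun x => ν x + δ)

/-- `Post(S,t)`: all valuations reachable by the transition from valuations in `S`. -/
def Post {X : Type*} (g : Guard X) (R : Set X) (S : Set (Val X)) : Set (Val X) :=
  { ν' | ∃ ν ∈ S, ∃ δ : ℝ, step g R δ ν ν' }

/-- A timed automaton `(Q, q₀, X, T, Acc)`. -/
structure TimedAuto (Q X : Type*) where
  init : Q
  trans : Set (Q × Guard X × Set X × Q)
  acc : Set Q

/-- `(q,ν) →^{δ,t} (q',ν')` for a transition `t = (q,g,R,q')` of the automaton. -/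
def TimedAuto.cstep {Q X : Type*} (A : TimedAuto Q X) (t : Q × Guard X × Set X × Q)
    (δ : ℝ) (c c' : Q × Val X) : Prop :=
  t ∈ A.trans ∧ c.1 = t.1 ∧ c'.1 = t.2.2.2 ∧ step t.2.1 t.2.2.1 δ c.2 c'.2

/-! ### Auxiliary lemmas for Statement 13 -/

section Stmt13Aux

set_option linter.unusedSectionVars false

variable {X : Type*} [Fintype X] {α : X → ℕ}

/-- A real is `≤` an integer iff its floor is smaller, or its floor equals it and the
fractional part vanishes. -/
lemma le_int_iff_aux {a : ℝ} {c : ℤ} :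
    a ≤ (c : ℝ) ↔ (⌊a⌋ < c ∨ (⌊a⌋ = c ∧ Int.fract a = 0)) := by
  constructor
  · intro h
    have h1 : ⌊a⌋ ≤ c := by
      have := Int.floor_le_floor h
      rwa [Int.floor_intCast] at this
    rcases lt_or_eq_of_le h1 with h2 | h2
    · exact Or.inl h2
    · refine Or.inr ⟨h2, ?_⟩
      have h3 : (c : ℝ) ≤ a := by
        rw [← h2]; exact Int.floor_le a
      have h4 : a = (c : ℝ) := le_antisymm h h3
      rw [h4, Int.fract_intCast]
  · rintro (h | ⟨h1, h2⟩)
    · have h2 : ⌊a⌋ + 1 ≤ c := h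
      have h3 : a < ⌊a⌋ + 1 := Int.lt_floor_add_one a
      have h4 : ((⌊a⌋ : ℝ) + 1) ≤ (c : ℝ) := by exact_mod_cast h2
      linarith
    · have h3 : a = (⌊a⌋ : ℝ) := by
        have h4 := Int.self_sub_floor a
        rw [h2] at h4
        linarith
      rw [h3, h1]
  
/-- Transfer a comparison with a natural constant along equality of floors and
vanishing of fractional parts. -/
lemma cmp_transfer {a b : ℝ} {c : ℕ} (cmp : Cmp) (hf : ⌊a⌋ = ⌊b⌋)
    (hfr : Int.fract a = 0 ↔ Int.fract b = 0) (h : Cmp.sat cmp a (c : ℝ)) :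
    Cmp.sat cmp b (c : ℝ) := by
  have hc : ((c : ℤ) : ℝ) = (c : ℝ) := by push_cast; ring
  have hle : a ≤ (c : ℝ) ↔ b ≤ (c : ℝ) := by
    rw [← hc, le_int_iff_aux, le_int_iff_aux, hf]
    exact or_congr Iff.rfl (and_congr Iff.rfl hfr)
  have hlt : a < (c : ℝ) ↔ b < (c : ℝ) := by
    rw [← hc, ← Int.floor_lt, ← Int.floor_lt, hf]
  have hge : (c : ℝ) ≤ a ↔ (c : ℝ) ≤ b := by
    rw [← hc, ← Int.le_floor, ← Int.le_floor, hf]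
  cases cmp with
  | lt => exact hlt.1 h
  | le => exact hle.1 h
  | eq => exact le_antisymm (hle.1 h.le) (hge.1 h.ge)
  | ge => exact hge.1 h
  | gt => simpa [Cmp.sat, ← not_le] using (not_iff_not.2 hle).1 (by simpa [Cmp.sat, ← not_le] using h)

/-- Transfer of boundedness by `c` along equality of floors / vanishing of fract. -/
lemma bound_of_floor {a b : ℝ} {c : ℕ} (hf : ⌊a⌋ = ⌊b⌋)
    (hfr : Int.fract a = 0 ↔ Int.fract b = 0) (ha : a ≤ (c : ℝ)) : b ≤ (c : ℝ) := by
  have hc : ((c : ℤ) : ℝ) = (c : ℝ) := by push_cast; ring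
  rw [← hc, le_int_iff_aux] at ha ⊢
  rw [hf] at ha
  exact ha.imp id (fun h => ⟨h.1, hfr.1 h.2⟩)

lemma above_of_floor {a b : ℝ} {c : ℕ} (hf : ⌊a⌋ = ⌊b⌋)
    (hfr : Int.fract a = 0 ↔ Int.fract b = 0) (ha : (c : ℝ) < a) : (c : ℝ) < b := by
  by_contra hcon
  push_neg at hcon
  exact absurd (bound_of_floor hf.symm hfr.symm hcon) (not_le.2 ha)

lemma regEq_refl (v : Val X) : regEq α v v :=
  ⟨fun _ => Or.inr ⟨rfl, Iff.rfl⟩, fun _ _ _ _ => Iff.rfl⟩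

lemma regEq_bounded {v w : Val X} (h : regEq α v w) {x : X} (hx : v x ≤ (α x : ℝ)) :
    ⌊v x⌋ = ⌊w x⌋ ∧ (Int.fract (v x) = 0 ↔ Int.fract (w x) = 0) := by
  rcases h.1 x with ⟨h1, _⟩ | h2
  · linarith
  · exact h2

lemma regEq_boundedRev {v w : Val X} (h : regEq α v w) {x : X} (hx : w x ≤ (α x : ℝ)) :
    ⌊v x⌋ = ⌊w x⌋ ∧ (Int.fract (v x) = 0 ↔ Int.fract (w x) = 0) := by
  rcases h.1 x with ⟨_, h1⟩ | h2
  · linarith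
  · exact h2

lemma regEq_bounded_iff {v w : Val X} (h : regEq α v w) (x : X) :
    v x ≤ (α x : ℝ) ↔ w x ≤ (α x : ℝ) := by
  constructor
  · intro hx
    obtain ⟨hf, hr⟩ := regEq_bounded h hx
    exact bound_of_floor hf hr hx
  · intro hx
    obtain ⟨hf, hr⟩ := regEq_boundedRev h hx
    exact bound_of_floor hf.symm hr.symm hx

lemma regEq_symm {v w : Val X} (h : regEq α v w) : regEq α w v := by
  constructor
  · intro x
    rcases h.1 x with ⟨h1, h2⟩ | ⟨h1, h2⟩
    · exact Or.inl ⟨h2, h1⟩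
    · exact Or.inr ⟨h1.symm, h2.symm⟩
  · intro x y hx hy
    exact (h.2 x y ((regEq_bounded_iff h x).2 hx) ((regEq_bounded_iff h y).2 hy)).symm

lemma regEq_trans {u v w : Val X} (h1 : regEq α u v) (h2 : regEq α v w) : regEq α u w := by
  constructor
  · intro x
    rcases h1.1 x with ⟨ha, hb⟩ | ⟨hf1, hr1⟩ <;> rcases h2.1 x with ⟨hc, hd⟩ | ⟨hf2, hr2⟩
    · exact Or.inl ⟨ha, hd⟩
    · exact Or.inl ⟨ha, above_of_floor hf2 hr2 hb⟩
    · exact Or.inl ⟨above_of_floor hf1.symm hr1.symm hc, hd⟩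
    · exact Or.inr ⟨hf1.trans hf2, hr1.trans hr2⟩
  · intro x y hx hy
    exact (h1.2 x y hx hy).trans
      (h2.2 x y ((regEq_bounded_iff h1 x).1 hx) ((regEq_bounded_iff h1 y).1 hy))

/-! #### Resets and guards respect region equivalence -/

lemma resetVal_cases (R : Set X) (v w : Val X) (x : X) :
    (resetVal R v x = v x ∧ resetVal R w x = w x) ∨
      (resetVal R v x = 0 ∧ resetVal R w x = 0) := by
  by_cases hx : x ∈ Rᶜ
  · exact Or.inl ⟨Set.indicator_of_mem hx v, Set.indicator_of_mem hx w⟩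
  · exact Or.inr ⟨Set.indicator_of_notMem hx v, Set.indicator_of_notMem hx w⟩

lemma regEq_reset {v w : Val X} (h : regEq α v w) (R : Set X) :
    regEq α (resetVal R v) (resetVal R w) := by
  constructor
  · intro x
    rcases resetVal_cases R v w x with ⟨h1, h2⟩ | ⟨h1, h2⟩
    · rw [h1, h2]; exact h.1 x
    · rw [h1, h2]; exact Or.inr ⟨rfl, Iff.rfl⟩
  · intro x y hx hy
    rcases resetVal_cases R v w x with ⟨h1, h2⟩ | ⟨h1, h2⟩ <;>
      rcases resetVal_cases R v w y with ⟨h3, h4⟩ | ⟨h3, h4⟩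
    · rw [h1, h2, h3, h4]
      rw [h1] at hx; rw [h3] at hy
      exact h.2 x y hx hy
    · rw [h1, h2, h3, h4, Int.fract_zero]
      rw [h1] at hx
      obtain ⟨_, hr⟩ := regEq_bounded h hx
      constructor <;> intro hz
      · exact (hr.1 (le_antisymm hz (Int.fract_nonneg _))).le
      · exact (hr.2 (le_antisymm hz (Int.fract_nonneg _))).le
    · rw [h1, h2, Int.fract_zero]
      exact iff_of_true (Int.fract_nonneg _) (Int.fract_nonneg _)
    · rw [h1, h2, Int.fract_zero]
      exact iff_of_true (Int.fract_nonneg _) (Int.fract_nonneg _)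

lemma above_transfer {a b : ℝ} {c m : ℕ} (cmp : Cmp) (hc : c ≤ m)
    (ha : (m : ℝ) < a) (hb : (m : ℝ) < b) (h : Cmp.sat cmp a (c : ℝ)) :
    Cmp.sat cmp b (c : ℝ) := by
  have hcm : (c : ℝ) ≤ (m : ℝ) := by exact_mod_cast hc
  cases cmp with
  | lt => exact absurd h (by simp only [Cmp.sat]; linarith)
  | le => exact absurd h (by simp only [Cmp.sat]; push_neg; linarith)
  | eq => exact absurd h (by simp only [Cmp.sat]; intro he; linarith)
  | ge => show (c : ℝ) ≤ b; linarith
  | gt => show (c : ℝ) < b; linarith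

lemma regEq_gsat {v w : Val X} {g : Guard X} (h : regEq α v w)
    (hα : ∀ (x : X) (cmp : Cmp) (c : ℕ), (x, cmp, c) ∈ g → c ≤ α x)
    (hv : gsat v g) : gsat w g := by
  rintro ⟨x, cmp, c⟩ hp
  have hs := hv _ hp
  simp only at hs ⊢
  rcases h.1 x with ⟨h1, h2⟩ | ⟨hf, hr⟩
  · exact above_transfer cmp (hα x cmp c hp) h1 h2 hs
  · exact cmp_transfer cmp hf hr hs

/-! #### Floor and fract under time elapse -/

lemma floor_fract_add {a ε : ℝ} (h0 : 0 ≤ ε) (h1 : Int.fract a + ε < 1) :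
    ⌊a + ε⌋ = ⌊a⌋ ∧ Int.fract (a + ε) = Int.fract a + ε := by
  have hfl : ⌊a + ε⌋ = ⌊a⌋ := by
    rw [Int.floor_eq_iff]
    constructor
    · linarith [Int.floor_le a]
    · have := Int.floor_add_fract a
      push_cast
      linarith
  refine ⟨hfl, ?_⟩
  have e1 := Int.self_sub_floor (a + ε)
  have e2 := Int.self_sub_floor a
  rw [hfl] at e1
  linarith

lemma floor_fract_add_one {a ε : ℝ} (h1 : Int.fract a + ε = 1) :
    ⌊a + ε⌋ = ⌊a⌋ + 1 ∧ Int.fract (a + ε) = 0 := by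
  have ha : a + ε = ((⌊a⌋ + 1 : ℤ) : ℝ) := by
    have := Int.floor_add_fract a
    push_cast
    linarith
  rw [ha]
  exact ⟨Int.floor_intCast _, Int.fract_intCast _⟩

lemma exists_pos_forall_lt {P : X → Prop} {f : X → ℝ} (hf : ∀ x, P x → 0 < f x) :
    ∃ ε : ℝ, 0 < ε ∧ ∀ x, P x → ε < f x := by
  classical
  by_cases hne : (Finset.univ.filter P).Nonempty
  · obtain ⟨x0, hx0, he⟩ := Finset.exists_mem_eq_inf' hne f
    have h0 : 0 < (Finset.univ.filter P).inf' hne f := by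
      rw [he]
      exact hf x0 (Finset.mem_filter.1 hx0).2
    refine ⟨(Finset.univ.filter P).inf' hne f / 2, by linarith, fun x hPx => ?_⟩
    have h1 : (Finset.univ.filter P).inf' hne f ≤ f x :=
      Finset.inf'_le f (Finset.mem_filter.2 ⟨Finset.mem_univ x, hPx⟩)
    linarith
  · exact ⟨1, one_pos, fun x hPx =>
      absurd ⟨x, Finset.mem_filter.2 ⟨Finset.mem_univ x, hPx⟩⟩ hne⟩

/-! #### One-step time elapse lemmas -/

lemma regEq_interior {v w : Val X} (h : regEq α v w) {ε : ℝ} (hε : 0 < ε)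
    (hsm : ∀ x, v x ≤ (α x : ℝ) → Int.fract (v x) + ε < 1) :
    ∃ ε' : ℝ, 0 < ε' ∧ regEq α (fun x => v x + ε) (fun x => w x + ε') := by
  obtain ⟨ε', hε'0, hε'⟩ := exists_pos_forall_lt (P := fun x => w x ≤ (α x : ℝ))
    (f := fun x => 1 - Int.fract (w x))
    (fun x _ => show (0:ℝ) < 1 - Int.fract (w x) by linarith [Int.fract_lt_one (w x)])
  have hsm' : ∀ x, w x ≤ (α x : ℝ) → Int.fract (w x) + ε' < 1 := fun x hx => by
    have := hε' x hx; linarith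
  refine ⟨ε', hε'0, ?_, ?_⟩
  · intro x
    by_cases hx : v x ≤ (α x : ℝ)
    · obtain ⟨hf, _⟩ := regEq_bounded h hx
      have hwx : w x ≤ (α x : ℝ) := (regEq_bounded_iff h x).1 hx
      obtain ⟨hf1, hr1⟩ := floor_fract_add hε.le (hsm x hx)
      obtain ⟨hf2, hr2⟩ := floor_fract_add hε'0.le (hsm' x hwx)
      refine Or.inr ⟨by rw [hf1, hf2, hf], ?_⟩
      rw [hr1, hr2]
      exact iff_of_false (by nlinarith [Int.fract_nonneg (v x)])
        (by nlinarith [Int.fract_nonneg (w x)])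
    · push_neg at hx
      have hwx : (α x : ℝ) < w x := by
        by_contra hc
        push_neg at hc
        exact absurd ((regEq_bounded_iff h x).2 hc) (not_le.2 hx)
      exact Or.inl ⟨show (α x : ℝ) < v x + ε by linarith, show (α x : ℝ) < w x + ε' by linarith⟩
  · intro x y hx hy
    simp only at hx hy
    have hx0 : v x ≤ (α x : ℝ) := by linarith
    have hy0 : v y ≤ (α y : ℝ) := by linarith
    have hwx : w x ≤ (α x : ℝ) := (regEq_bounded_iff h x).1 hx0
    have hwy : w y ≤ (α y : ℝ) := (regEq_bounded_iff h y).1 hy0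
    rw [(floor_fract_add hε.le (hsm x hx0)).2, (floor_fract_add hε.le (hsm y hy0)).2,
      (floor_fract_add hε'0.le (hsm' x hwx)).2, (floor_fract_add hε'0.le (hsm' y hwy)).2,
      add_le_add_iff_right, add_le_add_iff_right]
    exact h.2 x y hx0 hy0

lemma regEq_boundary {v w : Val X} (h : regEq α v w) {z : X}
    (hz : v z ≤ (α z : ℝ))
    (hmax : ∀ x, v x ≤ (α x : ℝ) → Int.fract (v x) ≤ Int.fract (v z))
    (hnz : ∀ x, v x ≤ (α x : ℝ) → Int.fract (v x) ≠ 0) :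
    regEq α (fun x => v x + (1 - Int.fract (v z))) (fun x => w x + (1 - Int.fract (w z))) := by
  set d := 1 - Int.fract (v z) with hdd
  set d' := 1 - Int.fract (w z) with hdd'
  have hwz : w z ≤ (α z : ℝ) := (regEq_bounded_iff h z).1 hz
  have hd0 : 0 < d := by rw [hdd]; linarith [Int.fract_lt_one (v z)]
  have hd'0 : 0 < d' := by rw [hdd']; linarith [Int.fract_lt_one (w z)]
  -- key dichotomy for bounded clocks
  have key : ∀ x, v x ≤ (α x : ℝ) →
      (⌊v x + d⌋ = ⌊v x⌋ + 1 ∧ Int.fract (v x + d) = 0 ∧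
        ⌊w x + d'⌋ = ⌊w x⌋ + 1 ∧ Int.fract (w x + d') = 0) ∨
      (⌊v x + d⌋ = ⌊v x⌋ ∧ Int.fract (v x + d) = Int.fract (v x) + d ∧
        ⌊w x + d'⌋ = ⌊w x⌋ ∧ Int.fract (w x + d') = Int.fract (w x) + d') := by
    intro x hx
    have hwx : w x ≤ (α x : ℝ) := (regEq_bounded_iff h x).1 hx
    by_cases heq : Int.fract (v x) = Int.fract (v z)
    · left
      have hweq : Int.fract (w x) = Int.fract (w z) := by
        have h1 := (h.2 x z hx hz).1 (le_of_eq heq)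
        have h2 := (h.2 z x hz hx).1 (ge_of_eq heq)
        linarith
      obtain ⟨a1, a2⟩ := floor_fract_add_one (a := v x) (ε := d) (by rw [heq, hdd]; ring)
      obtain ⟨a3, a4⟩ := floor_fract_add_one (a := w x) (ε := d') (by rw [hweq, hdd']; ring)
      exact ⟨a1, a2, a3, a4⟩
    · right
      have hlt : Int.fract (v x) < Int.fract (v z) := lt_of_le_of_ne (hmax x hx) heq
      have hwlt : Int.fract (w x) < Int.fract (w z) := by
        by_contra hc
        push_neg at hc
        exact absurd ((h.2 z x hz hx).2 hc) (not_le.2 hlt)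
      obtain ⟨a1, a2⟩ := floor_fract_add (a := v x) (ε := d) hd0.le (by rw [hdd]; linarith)
      obtain ⟨a3, a4⟩ := floor_fract_add (a := w x) (ε := d') hd'0.le (by rw [hdd']; linarith)
      exact ⟨a1, a2, a3, a4⟩
  constructor
  · intro x
    by_cases hx : v x ≤ (α x : ℝ)
    · have hf := (regEq_bounded h hx).1
      rcases key x hx with ⟨a1, a2, a3, a4⟩ | ⟨a1, a2, a3, a4⟩
      · exact Or.inr ⟨by rw [a1, a3, hf], by rw [a2, a4]⟩
      · refine Or.inr ⟨by rw [a1, a3, hf], ?_⟩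
        rw [a2, a4]
        exact iff_of_false (by nlinarith [Int.fract_nonneg (v x)])
          (by nlinarith [Int.fract_nonneg (w x)])
    · push_neg at hx
      have hwx : (α x : ℝ) < w x := by
        by_contra hc
        push_neg at hc
        exact absurd ((regEq_bounded_iff h x).2 hc) (not_le.2 hx)
      exact Or.inl ⟨show (α x : ℝ) < v x + d by linarith, show (α x : ℝ) < w x + d' by linarith⟩
  · intro x y hx hy
    simp only at hx hy
    have hx0 : v x ≤ (α x : ℝ) := by linarith
    have hy0 : v y ≤ (α y : ℝ) := by linarith
    rcases key x hx0 with ⟨_, a2, _, a4⟩ | ⟨_, a2, _, a4⟩ <;>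
      rcases key y hy0 with ⟨_, b2, _, b4⟩ | ⟨_, b2, _, b4⟩
    · rw [a2, a4, b2, b4]
    · rw [a2, a4]
      exact iff_of_true (by rw [b2]; linarith [Int.fract_nonneg (v y)])
        (by rw [b4]; linarith [Int.fract_nonneg (w y)])
    · rw [b2, b4, a2, a4]
      exact iff_of_false (by push_neg; nlinarith [Int.fract_nonneg (v x)])
        (by push_neg; nlinarith [Int.fract_nonneg (w x)])
    · rw [a2, a4, b2, b4, add_le_add_iff_right, add_le_add_iff_right]
      exact h.2 x y hx0 hy0

/-! #### The region measure and its decrease -/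

/-- Measure counting how many region boundaries remain ahead of `v`. -/
def Nmeas (α : X → ℕ) (v : Val X) : ℕ :=
  ∑ x : X, if v x ≤ (α x : ℝ) then
    2 * ((α x : ℤ) - ⌊v x⌋).toNat + (if Int.fract (v x) = 0 then 1 else 0) else 0

lemma floor_le_alpha {v : Val X} {x : X} (hb : v x ≤ (α x : ℝ)) : ⌊v x⌋ ≤ (α x : ℤ) := by
  have := Int.floor_le_floor hb
  rwa [Int.floor_natCast] at this

lemma floor_lt_alpha {v : Val X} {x : X} (hb : v x ≤ (α x : ℝ))
    (hnz : Int.fract (v x) ≠ 0) : ⌊v x⌋ < (α x : ℤ) := by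
  rcases lt_or_eq_of_le (floor_le_alpha hb) with h | h
  · exact h
  · exfalso
    apply hnz
    have h1 := Int.self_sub_floor (v x)
    have h2 : ((⌊v x⌋ : ℤ) : ℝ) = (α x : ℝ) := by rw [h]; push_cast; ring
    have h3 := Int.fract_nonneg (v x)
    linarith

lemma Nmeas_interior_lt {v : Val X} {ε : ℝ} (hε : 0 < ε)
    (hsm : ∀ x, v x ≤ (α x : ℝ) → Int.fract (v x) + ε < 1)
    {x0 : X} (hx0 : v x0 ≤ (α x0 : ℝ)) (hfr0 : Int.fract (v x0) = 0) :
    Nmeas α (fun x => v x + ε) < Nmeas α v := by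
  simp only [Nmeas]
  apply Finset.sum_lt_sum
  · intro x _
    by_cases hb' : v x + ε ≤ (α x : ℝ)
    · have hb : v x ≤ (α x : ℝ) := by linarith
      obtain ⟨hf, hfr⟩ := floor_fract_add hε.le (hsm x hb)
      have hne : Int.fract (v x + ε) ≠ 0 := by
        rw [hfr]; intro hcon; linarith [Int.fract_nonneg (v x)]
      simp only [if_pos hb', if_pos hb, hf, if_neg hne]
      exact Nat.le_add_right _ _
    · simp only [if_neg hb']
      exact Nat.zero_le _
  · refine ⟨x0, Finset.mem_univ x0, ?_⟩
    by_cases hb' : v x0 + ε ≤ (α x0 : ℝ)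
    · obtain ⟨hf, hfr⟩ := floor_fract_add hε.le (hsm x0 hx0)
      have hne : Int.fract (v x0 + ε) ≠ 0 := by
        rw [hfr]; intro hcon; linarith [Int.fract_nonneg (v x0)]
      simp only [if_pos hb', if_pos hx0, hf, if_neg hne, if_pos hfr0]
      omega
    · simp only [if_neg hb', if_pos hx0, if_pos hfr0]
      omega

lemma Nmeas_boundary_lt {v : Val X} {z : X} (hz : v z ≤ (α z : ℝ))
    (hmax : ∀ x, v x ≤ (α x : ℝ) → Int.fract (v x) ≤ Int.fract (v z))
    (hnz : ∀ x, v x ≤ (α x : ℝ) → Int.fract (v x) ≠ 0) :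
    Nmeas α (fun x => v x + (1 - Int.fract (v z))) < Nmeas α v := by
  set d := 1 - Int.fract (v z) with hdd
  have hd0 : 0 < d := by rw [hdd]; linarith [Int.fract_lt_one (v z)]
  simp only [Nmeas]
  apply Finset.sum_lt_sum
  · intro x _
    by_cases hb : v x ≤ (α x : ℝ)
    · have hnzx := hnz x hb
      have hflx := floor_lt_alpha hb hnzx
      by_cases heq : Int.fract (v x) = Int.fract (v z)
      · obtain ⟨hf, hfr⟩ := floor_fract_add_one
          (show Int.fract (v x) + d = 1 by rw [hdd, heq]; ring)
        by_cases hb' : v x + d ≤ (α x : ℝ)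
        · simp only [if_pos hb', if_pos hb, hf, if_pos hfr, if_neg hnzx]
          omega
        · simp only [if_neg hb']
          exact Nat.zero_le _
      · have hlt := lt_of_le_of_ne (hmax x hb) heq
        obtain ⟨hf, hfr⟩ := floor_fract_add hd0.le
          (show Int.fract (v x) + d < 1 by rw [hdd]; linarith)
        have hb' : v x + d ≤ (α x : ℝ) := by
          have h1 := Int.floor_add_fract (v x)
          have h2 : ((⌊v x⌋ : ℤ) : ℝ) + 1 ≤ (α x : ℝ) := by
            have : ⌊v x⌋ + 1 ≤ (α x : ℤ) := by omega
            exact_mod_cast this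
          rw [hdd]
          linarith
        have hne : Int.fract (v x + d) ≠ 0 := by
          rw [hfr]; intro hcon; linarith [Int.fract_nonneg (v x)]
        simp only [if_pos hb', if_pos hb, hf, if_neg hne, if_neg hnzx]
        exact le_rfl
    · have hb' : ¬ (v x + d ≤ (α x : ℝ)) := by push_neg at hb ⊢; linarith
      simp only [if_neg hb', if_neg hb]
      exact le_rfl
  · refine ⟨z, Finset.mem_univ z, ?_⟩
    have hnzz := hnz z hz
    have hflz := floor_lt_alpha hz hnzz
    obtain ⟨hf, hfr⟩ := floor_fract_add_one (show Int.fract (v z) + d = 1 by rw [hdd]; ring)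
    by_cases hb' : v z + d ≤ (α z : ℝ)
    · simp only [if_pos hb', if_pos hz, hf, if_pos hfr, if_neg hnzz]
      omega
    · simp only [if_neg hb', if_pos hz, if_neg hnzz]
      omega

/-! #### Time elapse preserves region equivalence -/

lemma regEq_elapse {v w : Val X} (h : regEq α v w) {δ : ℝ} (hδ : 0 ≤ δ) :
    ∃ δ' : ℝ, 0 ≤ δ' ∧ regEq α (fun x => v x + δ) (fun x => w x + δ') := by
  suffices H : ∀ n : ℕ, ∀ v w : Val X, Nmeas α v ≤ n → regEq α v w → ∀ δ : ℝ, 0 ≤ δ →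
      ∃ δ' : ℝ, 0 ≤ δ' ∧ regEq α (fun x => v x + δ) (fun x => w x + δ') by
    exact H _ v w le_rfl h δ hδ
  intro n
  induction n using Nat.strong_induction_on with
  | _ n ih =>
    intro v w hN h δ hδ
    rcases eq_or_lt_of_le hδ with hδ0 | hδ0
    · refine ⟨0, le_rfl, ?_⟩
      have e1 : (fun x => v x + δ) = v := by funext x; rw [← hδ0]; ring
      have e2 : (fun x => w x + 0) = w := by funext x; ring
      rw [e1, e2]; exact h
    by_cases hC : ∀ x, v x ≤ (α x : ℝ) → Int.fract (v x) + δ < 1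
    · obtain ⟨ε', hε'0, hreg⟩ := regEq_interior h hδ0 hC
      exact ⟨ε', hε'0.le, hreg⟩
    · push_neg at hC
      obtain ⟨x1, hx1b, hx1⟩ := hC
      by_cases hz : ∃ x0, v x0 ≤ (α x0 : ℝ) ∧ Int.fract (v x0) = 0
      · -- a bounded clock has integer value: take a small interior step, then recurse
        obtain ⟨x0, hx0b, hx0⟩ := hz
        obtain ⟨ε0, hε00, hε0lt⟩ := exists_pos_forall_lt (P := fun x => v x ≤ (α x : ℝ))
          (f := fun x => 1 - Int.fract (v x))
          (fun x _ => show (0:ℝ) < 1 - Int.fract (v x) by linarith [Int.fract_lt_one (v x)])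
        set ε := min δ ε0 with hεd
        have hε : 0 < ε := lt_min hδ0 hε00
        have hεδ : ε ≤ δ := min_le_left δ ε0
        have hsm : ∀ x, v x ≤ (α x : ℝ) → Int.fract (v x) + ε < 1 := fun x hx => by
          have h1 := hε0lt x hx
          have h2 : ε ≤ ε0 := min_le_right δ ε0
          linarith
        obtain ⟨ε', hε'0, hreg1⟩ := regEq_interior h hε hsm
        have hdec := Nmeas_interior_lt (α := α) hε hsm hx0b hx0
        obtain ⟨δ'', hδ''0, hreg2⟩ := ih (Nmeas α (fun x => v x + ε))
          (lt_of_lt_of_le hdec hN) _ _ le_rfl hreg1 (δ - ε) (by linarith)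
        refine ⟨ε' + δ'', by linarith, ?_⟩
        have e1 : (fun x => v x + δ) = (fun x => (v x + ε) + (δ - ε)) := by funext x; ring
        have e2 : (fun x => w x + (ε' + δ'')) = (fun x => (w x + ε') + δ'') := by
          funext x; ring
        rw [e1, e2]
        exact hreg2
      · -- all bounded clocks have nonzero fract: step to the next boundary, then recurse
        push_neg at hz
        obtain ⟨z, hzmem, hzmax⟩ := Finset.exists_max_image
          (Finset.univ.filter (fun x => v x ≤ (α x : ℝ))) (fun x => Int.fract (v x))
          ⟨x1, Finset.mem_filter.2 ⟨Finset.mem_univ x1, hx1b⟩⟩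
        have hzb : v z ≤ (α z : ℝ) := (Finset.mem_filter.1 hzmem).2
        have hmax : ∀ x, v x ≤ (α x : ℝ) → Int.fract (v x) ≤ Int.fract (v z) := fun x hx =>
          hzmax x (Finset.mem_filter.2 ⟨Finset.mem_univ x, hx⟩)
        set d := 1 - Int.fract (v z) with hdd
        set d' := 1 - Int.fract (w z) with hdd'
        have hd0 : 0 < d := by rw [hdd]; linarith [Int.fract_lt_one (v z)]
        have hd'0 : 0 < d' := by rw [hdd']; linarith [Int.fract_lt_one (w z)]
        have hdδ : d ≤ δ := by
          have h1 := hmax x1 hx1b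
          rw [hdd]
          linarith
        have hreg1 := regEq_boundary h hzb hmax hz
        have hdec := Nmeas_boundary_lt (α := α) hzb hmax hz
        obtain ⟨δ'', hδ''0, hreg2⟩ := ih (Nmeas α (fun x => v x + d))
          (lt_of_lt_of_le hdec hN) _ _ le_rfl hreg1 (δ - d) (by linarith)
        refine ⟨d' + δ'', by linarith, ?_⟩
        have e1 : (fun x => v x + δ) = (fun x => (v x + d) + (δ - d)) := by funext x; ring
        have e2 : (fun x => w x + (d' + δ'')) = (fun x => (w x + d') + δ'') := by
          funext x; ring
        rw [e1, e2]
        exact hreg2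

/-! #### Nonnegativity helpers -/

lemma Nonneg_add {v : Val X} (hv : Nonneg v) {δ : ℝ} (hδ : 0 ≤ δ) :
    Nonneg (fun x => v x + δ) := fun x => by have := hv x; simp only; linarith

lemma Nonneg_reset {v : Val X} (hv : Nonneg v) (R : Set X) : Nonneg (resetVal R v) :=
  fun x => Set.indicator_apply_nonneg (fun _ => hv x)

end Stmt13Aux

/-- If `α_x ≥ c` for every constraint `x # c` occurring in the guard
of `t`, then for every zone `Z`: `Post(Closure_α(Z), t) ⊆ Closure_α(Post(Z, t))`. -/
theorem stmt13 {X : Type*} [Fintype X] (α : X → ℕ) (g : Guard X) (Rs : Set X)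
    (hα : ∀ (x : X) (cmp : Cmp) (c : ℕ), (x, cmp, c) ∈ g → c ≤ α x)
    (Z : Set (Val X)) (hZ : IsZone Z) :
    Post g Rs (Closure α Z) ⊆ Closure α (Post g Rs Z) := by
  rintro ν' ⟨ν, hνC, δ, hδ0, hgs, hre⟩
  obtain ⟨Rg, ⟨⟨v0, hv0n, rfl⟩, ⟨ν₀, ⟨hν₀n, hreg0⟩, hν₀Z⟩⟩, hνn, hregν⟩ := hνC
  have hνν₀ : regEq α ν ν₀ := regEq_trans (regEq_symm hregν) hreg0
  obtain ⟨δ₀, hδ₀0, hregd⟩ := regEq_elapse hνν₀ hδ0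
  have hgs₀ : gsat (fun x => ν₀ x + δ₀) g := regEq_gsat hregd hα hgs
  have hregr : regEq α (resetVal Rs (fun x => ν x + δ)) (resetVal Rs (fun x => ν₀ x + δ₀)) :=
    regEq_reset hregd Rs
  subst hre
  have hν'n : Nonneg (resetVal Rs (fun x => ν x + δ)) :=
    Nonneg_reset (Nonneg_add hνn hδ0) Rs
  refine Set.mem_sUnion.2
    ⟨{w | Nonneg w ∧ regEq α (resetVal Rs (fun x => ν x + δ)) w},
      ⟨⟨_, hν'n, rfl⟩,
        ⟨resetVal Rs (fun x => ν₀ x + δ₀),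
          ⟨Nonneg_reset (Nonneg_add hν₀n hδ₀0) Rs, hregr⟩,
          ⟨ν₀, hν₀Z, δ₀, hδ₀0, hgs₀, rfl⟩⟩⟩,
      hν'n, regEq_refl _⟩


end TAform

end
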